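/- Suppose the OSC holds with open sets (U_v)_{v∈V}, and let f, g ∈ E_u^* be two finite paths starting at u such that neither is a subpath of the other (f ⊄ g and g ⊄ f). Then (a) S_f(U_{t(f)}) ∩ S_g(U_{t(g)}) = ∅, and (b) S_f(F_{t(f)}) ∩ S_g(U_{t(g)}) = ∅. -/

import Mathlib

open MeasureTheory Metric Set Filter Topology Asymptotics

noncomputable section

/-- Euclidean space `ℝ^m`. -/
abbrev Euc (m : ℕ) : Type := EuclideanSpace ℝ (Fin m)

/-- The topological support of a measure. -/
def mSupport {X : Type} [TopologicalSpace X] [MeasurableSpace X]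
    (μ : Measure X) : Set X :=
  {x | ∀ U : Set X, IsOpen U → x ∈ U → 0 < μ U}

/-- The probability weight of a finite path (product of its edge weights). -/
def pathProb {E : Type} (w : E → ℝ) (p : List E) : ℝ := (p.map w).prod

/-- `f` is a subpath of `g`. -/
def IsSubpath {E : Type} (f g : List E) : Prop := ∃ s t : List E, g = s ++ f ++ t

/-- The distance between two sets. -/
def setDist {X : Type} [PseudoMetricSpace X] (A B : Set X) : ℝ :=
  sInf (Set.image2 dist A B)

/-- The `q`-th packing moment `M_u^q(A,r)` of a measure `μ` on `A` at scale `r`: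
the supremum of `∑_{x∈D} μ(B̄(x,r))^q` over `r`-separated finite subsets `D ⊆ A`. -/
def packMoment {m : ℕ} (μ : Measure (Euc m)) (q : ℝ) (A : Set (Euc m)) (r : ℝ) : ℝ :=
  sSup {s : ℝ | ∃ D : Finset (Euc m), ↑D ⊆ A ∧
    (∀ x ∈ D, ∀ y ∈ D, x ≠ y → 2 * r < dist x y) ∧
    s = ∑ x ∈ D, (μ (Metric.closedBall x r)).toReal ^ q}

/-- The spectral radius of a real square matrix (via its complex spectrum). -/
def specRad {n : Type} [Fintype n] [DecidableEq n] (M : Matrix n n ℝ) : ENNReal :=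
  spectralRadius ℂ (M.map (algebraMap ℝ ℂ))

/-- A matrix is irreducible if some power has a positive `ij` entry, for every `i j`. -/
def MatIrreducible {n : Type} [Fintype n] [DecidableEq n] (M : Matrix n n ℝ) : Prop :=
  ∀ i j : n, ∃ k : ℕ, 0 < (M ^ k) i j

/-- A self-similar directed-graph IFS on `ℝ^m`: a finite strongly connected directed
multigraph with at least two edges out of each vertex, each edge carrying a contracting
similarity of `ℝ^m`. -/
structure GIFS (m : ℕ) (V E : Type) [Fintype V] [Fintype E] where
  src : E → V
  dst : E → V
  ratio : E → ℝ
  ratio_pos : ∀ e, 0 < ratio e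
  ratio_lt_one : ∀ e, ratio e < 1
  map : E → Euc m → Euc m
  map_similarity : ∀ e x y, dist (map e x) (map e y) = ratio e * dist x y
  two_edges : ∀ u : V, ∃ e f : E, e ≠ f ∧ src e = u ∧ src f = u
  strongly_connected : ∀ u v : V, ∃ p : List E, p ≠ [] ∧
    p.Chain' (fun a b => dst a = src b) ∧ p.head?.map src = some u ∧
    p.getLast?.map dst = some v

namespace GIFS

variable {m : ℕ} {V E : Type} [Fintype V] [Fintype E] (G : GIFS m V E)

/-- `p` is a directed path (consecutive edges match up). -/
def IsPath (p : List E) : Prop := p.Chain' (fun a b => G.dst a = G.src b)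

/-- `p` is a nonempty directed path from `u` to `v`. -/
def IsPathFrom (u v : V) (p : List E) : Prop :=
  p ≠ [] ∧ G.IsPath p ∧ p.head?.map G.src = some u ∧ p.getLast?.map G.dst = some v

/-- The contraction `S_{e₁} ∘ ⋯ ∘ S_{e_k}` along a path. -/
def pathMap (p : List E) : Euc m → Euc m := p.foldr (fun e f => G.map e ∘ f) id

/-- The contraction ratio along a path. -/
def pathRatio (p : List E) : ℝ := (p.map G.ratio).prod

/-- The terminal vertex of a path (with default `u` for the empty path). -/
def pathDst (u : V) (p : List E) : V := (p.getLast?.map G.dst).getD u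

/-- `(F u)_{u ∈ V}` is the attractor: the unique list of nonempty compact sets with
`F u = ⋃_{e ∈ E_u¹} S_e(F_{t(e)})`. -/
def IsAttractor (F : V → Set (Euc m)) : Prop :=
  (∀ u, (F u).Nonempty) ∧ (∀ u, IsCompact (F u)) ∧
  (∀ u, F u = ⋃ e ∈ {e : E | G.src e = u}, G.map e '' F (G.dst e))

/-- Probability weights on the edges: each in `(0,1)`, summing to `1` at each vertex. -/
def IsProbWeights (w : E → ℝ) : Prop :=
  (∀ e, w e ∈ Set.Ioo (0 : ℝ) 1) ∧
  (∀ u : V, ∑ e : E, Set.indicator {e : E | G.src e = u} w e = 1)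

/-- `(μ u)_{u ∈ V}` are the self-similar measures: Borel probability measures with
`μ_u(A) = ∑_{e ∈ E_u¹} p_e μ_{t(e)}(S_e⁻¹(A))` and `supp μ_u = F u`. -/
def IsSelfSimilarMeasures (w : E → ℝ) (F : V → Set (Euc m)) (μ : V → Measure (Euc m)) : Prop :=
  (∀ u, IsProbabilityMeasure (μ u)) ∧
  (∀ u (A : Set (Euc m)), MeasurableSet A →
    μ u A = ∑ e : E, Set.indicator {e : E | G.src e = u}
      (fun e => ENNReal.ofReal (w e) * μ (G.dst e) (G.map e ⁻¹' A)) e) ∧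
  (∀ u, mSupport (μ u) = F u)

/-- The strong separation condition. -/
def SSC (F : V → Set (Euc m)) : Prop :=
  ∀ u : V, ∀ e f : E, G.src e = u → G.src f = u → e ≠ f →
    (G.map e '' F (G.dst e)) ∩ (G.map f '' F (G.dst f)) = ∅

/-- The open set condition with open sets `U`. -/
def OSCWith (U : V → Set (Euc m)) : Prop :=
  (∀ u, (U u).Nonempty ∧ IsOpen (U u) ∧ Bornology.IsBounded (U u)) ∧
  (∀ e : E, G.map e '' U (G.dst e) ⊆ U (G.src e)) ∧
  (∀ u : V, ∀ e f : E, G.src e = u → G.src f = u → e ≠ f →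
    (G.map e '' U (G.dst e)) ∩ (G.map f '' U (G.dst f)) = ∅)

/-- The open set condition. -/
def OSC : Prop := ∃ U : V → Set (Euc m), G.OSCWith U

variable [DecidableEq V]

/-- The matrix `A(q,β)` with `uv` entry `∑_{e ∈ E¹_{uv}} p_e^q r_e^β`. -/
def matA (w : E → ℝ) (q β : ℝ) : Matrix V V ℝ :=
  Matrix.of fun u v => ∑ e : E,
    Set.indicator {e : E | G.src e = u ∧ G.dst e = v}
      (fun e => w e ^ q * G.ratio e ^ β) e

/-- The matrix `B(q,γ,l)` with `uv` entry `∑_{e ∈ E^l_{uv}, e ≠ l_u} p_e^q r_e^γ`. -/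
def matB (w : E → ℝ) (q γ : ℝ) (l : ℕ) (lu : V → List E) : Matrix V V ℝ :=
  Matrix.of fun u v => ∑ p : List.Vector E l,
    Set.indicator {p : List.Vector E l | G.IsPathFrom u v p.toList ∧ p.toList ≠ lu u}
      (fun p => pathProb w p.toList ^ q * G.pathRatio p.toList ^ γ) p

/-- The matrix of measures `P` with `uv` entry `∑_{e ∈ E¹_{uv}} p_e^q r_e^{β} δ_{ln(1/r_e)}`. -/
def matP (w : E → ℝ) (q β : ℝ) : V → V → Measure ℝ :=
  fun u v => ∑ e : E,
    (Set.indicator {e : E | G.src e = u ∧ G.dst e = v}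
      (fun e => ENNReal.ofReal (w e ^ q * G.ratio e ^ β)) e) •
      Measure.dirac (Real.log ((G.ratio e)⁻¹))

end GIFS

/-- `P` is a lattice matrix of measures with span `lam`. -/
def IsLatticeMatrix {V : Type} (P : V → V → MeasureTheory.Measure ℝ) (lam : ℝ) : Prop :=
  0 < lam ∧
  ∃ (L : V → V → ℝ) (b : V → V → ℝ),
    (∀ u v : V, 0 < L u v) ∧
    -- (a) each diagonal support generates the group `L u u • ℤ`
    (∀ u : V, AddSubgroup.closure (mSupport (P u u)) = AddSubgroup.zmultiples (L u u)) ∧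
    -- (b) off-diagonal supports lie in `b u v + L u v • ℤ`, with `L u v` maximal
    (∀ u v : V, u ≠ v →
      (mSupport (P u v) ⊆ {x : ℝ | ∃ n : ℤ, x = b u v + n * L u v}) ∧
      (∀ L' : ℝ, 0 < L' →
        (∃ b' : ℝ, mSupport (P u v) ⊆ {x : ℝ | ∃ n : ℤ, x = b' + n * L'}) → L' ≤ L u v)) ∧
    -- (c) the numbers `L u v` generate the group `lam • ℤ`
    (AddSubgroup.closure {x : ℝ | ∃ u v : V, x = L u v} = AddSubgroup.zmultiples lam) ∧
    -- (d) `supp P_uv + supp P_vw − supp P_uw ⊆ lam • ℤ`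
    (∀ u v z : V, ∀ a ∈ mSupport (P u v), ∀ a' ∈ mSupport (P v z), ∀ a'' ∈ mSupport (P u z),
      ∃ n : ℤ, a + a' - a'' = n * lam)


namespace GIFS

variable {m : ℕ} {V E : Type} [Fintype V] [Fintype E] (G : GIFS m V E)

lemma map_dist_eq (e : E) (x y : Euc m) :
    dist (G.map e x) (G.map e y) = G.ratio e * dist x y := G.map_similarity e x y

lemma map_continuous (e : E) : Continuous (G.map e) := by
  refine LipschitzWith.continuous (K := Real.toNNReal (G.ratio e)) ?_
  refine LipschitzWith.of_dist_le_mul fun x y => ?_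
  rw [G.map_dist_eq]
  have : ((Real.toNNReal (G.ratio e) : NNReal) : ℝ) = G.ratio e :=
    Real.coe_toNNReal _ (G.ratio_pos e).le
  rw [this]

lemma map_injective (e : E) : Function.Injective (G.map e) := by
  intro x y h
  have := G.map_dist_eq e x y
  rw [h, dist_self] at this
  have h2 : dist x y = 0 := by
    have hr := G.ratio_pos e
    nlinarith [dist_nonneg (x := x) (y := y)]
  exact dist_eq_zero.1 h2

lemma map_surjective (e : E) : Function.Surjective (G.map e) := by
  set r := G.ratio e with hr
  have hrpos : 0 < r := G.ratio_pos e
  set φ : Euc m → Euc m := fun x => r⁻¹ • G.map e x with hφ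
  have hiso : Isometry φ := by
    refine Isometry.of_dist_eq fun x y => ?_
    rw [hφ]
    simp only
    rw [dist_smul₀, G.map_dist_eq, Real.norm_eq_abs, abs_of_pos (inv_pos.2 hrpos)]
    field_simp
    rw [hr]
  set A := hiso.affineIsometryOfStrictConvexSpace with hA
  have hAφ : ⇑A = φ := rfl
  have hlin : Function.Surjective A.linearIsometry.toLinearMap :=
    LinearMap.injective_iff_surjective.1 A.linearIsometry.injective
  have hφsurj : Function.Surjective φ := by
    intro y
    obtain ⟨x, hx⟩ := hlin (y - φ 0)
    refine ⟨x, ?_⟩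
    have hdec := AffineMap.decomp A.toAffineMap
    have hx1 := congrFun hdec x
    simp only [Pi.add_apply] at hx1
    have h1 : φ x = A.linearIsometry.toLinearMap x + φ 0 := by
      calc φ x = A.toAffineMap x := rfl
        _ = A.toAffineMap.linear x + A.toAffineMap 0 := hx1
        _ = A.linearIsometry.toLinearMap x + φ 0 := rfl
    rw [h1, hx]; abel
  intro y
  obtain ⟨x, hx⟩ := hφsurj (r⁻¹ • y)
  refine ⟨x, ?_⟩
  have : r • φ x = r • (r⁻¹ • y) := by rw [hx]
  rw [hφ] at this
  simpa [smul_smul, mul_inv_cancel₀ hrpos.ne'] using this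

lemma map_isOpenMap (e : E) : IsOpenMap (G.map e) := by
  have hbij : Function.Bijective (G.map e) := ⟨G.map_injective e, G.map_surjective e⟩
  set Φ := Equiv.ofBijective _ hbij with hΦ
  have hΦapp : ∀ x, Φ x = G.map e x := fun _ => rfl
  have hsymm : ∀ y, G.map e (Φ.symm y) = y := fun y => Φ.apply_symm_apply y
  have hrpos : 0 < G.ratio e := G.ratio_pos e
  have hcont : Continuous Φ.symm := by
    refine LipschitzWith.continuous (K := Real.toNNReal (G.ratio e)⁻¹) ?_
    refine LipschitzWith.of_dist_le_mul fun x y => ?_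
    have h1 : dist x y = G.ratio e * dist (Φ.symm x) (Φ.symm y) := by
      conv_lhs => rw [← hsymm x, ← hsymm y]
      exact G.map_dist_eq e _ _
    have h2 : ((Real.toNNReal (G.ratio e)⁻¹ : NNReal) : ℝ) = (G.ratio e)⁻¹ :=
      Real.coe_toNNReal _ (inv_pos.2 hrpos).le
    rw [h2, h1]
    rw [← mul_assoc, inv_mul_cancel₀ hrpos.ne', one_mul]
  intro A hA
  have himg : G.map e '' A = Φ.symm ⁻¹' A := by
    ext y
    constructor
    · rintro ⟨x, hx, rfl⟩
      have : Φ.symm (G.map e x) = x := Φ.symm_apply_apply x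
      simpa [Set.mem_preimage, this] using hx
    · intro hy
      exact ⟨Φ.symm y, hy, hsymm y⟩
  rw [himg]
  exact hA.preimage hcont

lemma pathMap_nil : G.pathMap ([] : List E) = id := rfl

lemma pathMap_cons (e : E) (p : List E) :
    G.pathMap (e :: p) = G.map e ∘ G.pathMap p := rfl

lemma pathMap_append (p q : List E) :
    G.pathMap (p ++ q) = G.pathMap p ∘ G.pathMap q := by
  induction p with
  | nil => rfl
  | cons a p ih =>
    show G.map a ∘ G.pathMap (p ++ q) = (G.map a ∘ G.pathMap p) ∘ G.pathMap q
    rw [ih, Function.comp_assoc]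

lemma pathDst_nil (v : V) : G.pathDst v [] = v := rfl

lemma pathDst_cons (v : V) (e : E) (p : List E) :
    G.pathDst v (e :: p) = G.pathDst (G.dst e) p := by
  cases p with
  | nil => simp [pathDst]
  | cons a q =>
    have hne : (a :: q) ≠ [] := List.cons_ne_nil _ _
    simp [pathDst, List.getLast?_cons_cons, List.getLast?_eq_getLast hne]

lemma pathDst_append_cons (v : V) (p : List E) (e : E) (q : List E) :
    G.pathDst v (p ++ e :: q) = G.pathDst (G.dst e) q := by
  induction p generalizing v with
  | nil => exact G.pathDst_cons v e q
  | cons a p ih => rw [List.cons_append, G.pathDst_cons]; exact ih _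

lemma pathRatio_cons (e : E) (p : List E) :
    G.pathRatio (e :: p) = G.ratio e * G.pathRatio p := by
  simp [pathRatio]

lemma pathMap_dist (p : List E) (x y : Euc m) :
    dist (G.pathMap p x) (G.pathMap p y) = G.pathRatio p * dist x y := by
  induction p with
  | nil => simp [pathMap, pathRatio]
  | cons a p ih =>
    rw [pathMap_cons, Function.comp_apply, Function.comp_apply, G.map_dist_eq,
      ih, pathRatio_cons, mul_assoc]

lemma pathRatio_pos (p : List E) : 0 < G.pathRatio p := by
  refine List.prod_pos ?_
  intro x hx
  obtain ⟨e, _, rfl⟩ := List.mem_map.1 hx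
  exact G.ratio_pos e

lemma pathMap_injective (p : List E) : Function.Injective (G.pathMap p) := by
  intro x y h
  have := G.pathMap_dist p x y
  rw [h, dist_self] at this
  have hr := G.pathRatio_pos p
  have h2 : dist x y = 0 := by nlinarith [dist_nonneg (x := x) (y := y)]
  exact dist_eq_zero.1 h2

lemma nestU {U : V → Set (Euc m)} (hU : G.OSCWith U) :
    ∀ (q : List E) (v : V), G.IsPath q → (∀ a ∈ q.head?, G.src a = v) →
    G.pathMap q '' U (G.pathDst v q) ⊆ U v := by
  intro q
  induction q with
  | nil => intro v _ _; simp [pathMap_nil, pathDst_nil]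
  | cons a q ih =>
    intro v hq hh
    have ha : G.src a = v := hh a rfl
    have hq' := List.isChain_cons.1 hq
    rw [pathMap_cons, pathDst_cons, Set.image_comp]
    refine subset_trans (Set.image_mono (ih (G.dst a) hq'.2 ?_)) ?_
    · intro b hb; exact (hq'.1 b hb).symm
    · rw [← ha]; exact hU.2.1 a

lemma nestCl {U : V → Set (Euc m)} (hU : G.OSCWith U) :
    ∀ (q : List E) (v : V), G.IsPath q → (∀ a ∈ q.head?, G.src a = v) →
    G.pathMap q '' closure (U (G.pathDst v q)) ⊆ closure (U v) := by
  intro q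
  induction q with
  | nil => intro v _ _; simp [pathMap_nil, pathDst_nil]
  | cons a q ih =>
    intro v hq hh
    have ha : G.src a = v := hh a rfl
    have hq' := List.isChain_cons.1 hq
    rw [pathMap_cons, pathDst_cons, Set.image_comp]
    refine subset_trans (Set.image_mono (ih (G.dst a) hq'.2 ?_)) ?_
    · intro b hb; exact (hq'.1 b hb).symm
    · refine subset_trans (image_closure_subset_closure_image (G.map_continuous a)) ?_
      rw [← ha]
      exact closure_mono (hU.2.1 a)

/-- The attractor is contained in the closure of the OSC open sets. -/
lemma attractor_subset_closure [Nonempty V] {F U : V → Set (Euc m)}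
    (hF : G.IsAttractor F) (hU : G.OSCWith U) (u : V) : F u ⊆ closure (U u) := by
  have hE : Nonempty E := by
    obtain ⟨e, _, _, _, _⟩ := G.two_edges (Classical.arbitrary V)
    exact ⟨e⟩
  have hEuniv : (Finset.univ : Finset E).Nonempty := Finset.univ_nonempty
  set rmx := Finset.univ.sup' hEuniv G.ratio with hrmx
  have hr_le : ∀ e : E, G.ratio e ≤ rmx := fun e => Finset.le_sup' _ (Finset.mem_univ e)
  have hr_nonneg : 0 ≤ rmx := le_trans (G.ratio_pos (Classical.arbitrary E)).le
    (hr_le (Classical.arbitrary E))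
  have hr_lt : rmx < 1 := by
    rw [hrmx, Finset.sup'_lt_iff]
    intro e _
    exact G.ratio_lt_one e
  -- a uniform bound
  have hbase : ∀ v : V, ∃ C : ℝ, 0 ≤ C ∧ ∀ x ∈ F v, ∃ y ∈ closure (U v), dist x y ≤ C := by
    intro v
    obtain ⟨y0, hy0⟩ := (hU.1 v).1
    obtain ⟨R, hR⟩ := ((hF.2.1 v).isBounded).subset_closedBall y0
    refine ⟨max R 0, le_max_right _ _, fun x hx => ⟨y0, subset_closure hy0, ?_⟩⟩
    exact le_trans (hR hx) (le_max_left _ _)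
  choose Cf hCf0 hCf using hbase
  have hVuniv : (Finset.univ : Finset V).Nonempty := Finset.univ_nonempty
  set C := Finset.univ.sup' hVuniv Cf with hC
  have hCle : ∀ v, Cf v ≤ C := fun v => Finset.le_sup' _ (Finset.mem_univ v)
  have hC0 : 0 ≤ C := le_trans (hCf0 (Classical.arbitrary V)) (hCle _)
  have key : ∀ n : ℕ, ∀ v : V, ∀ x ∈ F v, ∃ y ∈ closure (U v), dist x y ≤ rmx ^ n * C := by
    intro n
    induction n with
    | zero =>
      intro v x hx
      obtain ⟨y, hy, hd⟩ := hCf v x hx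
      exact ⟨y, hy, by simpa using le_trans hd (hCle v)⟩
    | succ n ih =>
      intro v x hx
      rw [hF.2.2 v] at hx
      simp only [Set.mem_iUnion, Set.mem_setOf_eq] at hx
      obtain ⟨e, he, x', hx', rfl⟩ := hx
      obtain ⟨y', hy', hd'⟩ := ih (G.dst e) x' hx'
      refine ⟨G.map e y', ?_, ?_⟩
      · have h1 : G.map e y' ∈ G.map e '' closure (U (G.dst e)) := ⟨y', hy', rfl⟩
        have h2 := image_closure_subset_closure_image (G.map_continuous e) h1
        have h3 := closure_mono (hU.2.1 e) h2
        rwa [he] at h3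
      · rw [G.map_dist_eq]
        calc G.ratio e * dist x' y' ≤ rmx * (rmx ^ n * C) := by
              have h0 : 0 ≤ dist x' y' := dist_nonneg
              have h1 : 0 ≤ rmx ^ n * C := mul_nonneg (pow_nonneg hr_nonneg n) hC0
              have := G.ratio_pos e
              nlinarith [hr_le e]
          _ = rmx ^ (n + 1) * C := by ring
  intro x hx
  have hmem : x ∈ closure (closure (U u)) := by
    rw [Metric.mem_closure_iff]
    intro ε hε
    have htend : Filter.Tendsto (fun n : ℕ => rmx ^ n * C) Filter.atTop (nhds 0) := by
      have := (tendsto_pow_atTop_nhds_zero_of_lt_one hr_nonneg hr_lt).mul_const C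
      simpa using this
    obtain ⟨n, hn⟩ := (htend.eventually (eventually_lt_nhds hε)).exists
    obtain ⟨y, hy, hd⟩ := key n u x hx
    exact ⟨y, hy, lt_of_le_of_lt hd hn⟩
  rwa [closure_closure] at hmem

/-- Divergence of two lists, neither a prefix of the other. -/
lemma list_diverge {E : Type} :
    ∀ (f g : List E), ¬ f <+: g → ¬ g <+: f →
      ∃ (p : List E) (e e' : E) (f₁ g₁ : List E),
        f = p ++ e :: f₁ ∧ g = p ++ e' :: g₁ ∧ e ≠ e' := by
  intro f
  induction f with
  | nil => intro g hf _; exact absurd (List.nil_prefix) hf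
  | cons a f ih =>
    intro g hf hg
    cases g with
    | nil => exact absurd (List.nil_prefix) hg
    | cons b g =>
      by_cases hab : a = b
      · subst hab
        have hf' : ¬ f <+: g := fun h => hf (List.cons_prefix_cons.2 ⟨rfl, h⟩)
        have hg' : ¬ g <+: f := fun h => hg (List.cons_prefix_cons.2 ⟨rfl, h⟩)
        obtain ⟨p, e, e', f₁, g₁, h1, h2, h3⟩ := ih g hf' hg'
        exact ⟨a :: p, e, e', f₁, g₁, by simp [h1], by simp [h2], h3⟩
      · exact ⟨[], a, b, f, g, rfl, rfl, hab⟩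

lemma src_of_split {u vf : V} {p : List E} {e : E} {f₁ : List E}
    (hf : G.IsPathFrom u vf (p ++ e :: f₁)) : G.src e = G.pathDst u p := by
  cases p with
  | nil =>
    have := hf.2.2.1
    simp only [List.nil_append, List.head?_cons, Option.map_some] at this
    rw [pathDst_nil]
    exact Option.some_injective _ this
  | cons a q =>
    have hchain := hf.2.1
    rw [GIFS.IsPath, List.Chain', List.isChain_append] at hchain
    have hlast := hchain.2.2
    have hne : a :: q ≠ [] := List.cons_ne_nil _ _
    have h1 : G.dst ((a :: q).getLast hne) = G.src e := by
      apply hlast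
      · rw [List.getLast?_eq_getLast hne]; rfl
      · rfl
    rw [GIFS.pathDst, List.getLast?_eq_getLast hne]
    simpa using h1.symm

lemma tail_path_of_split {u vf : V} {p : List E} {e : E} {f₁ : List E}
    (hf : G.IsPathFrom u vf (p ++ e :: f₁)) :
    G.IsPath f₁ ∧ (∀ a ∈ f₁.head?, G.src a = G.dst e) ∧ G.pathDst (G.dst e) f₁ = vf := by
  have hchain := hf.2.1
  rw [GIFS.IsPath, List.Chain', List.isChain_append] at hchain
  have h2 := List.isChain_cons.1 hchain.2.1
  refine ⟨h2.2, fun a ha => (h2.1 a ha).symm, ?_⟩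
  have hlast := hf.2.2.2
  have h3 : G.pathDst u (p ++ e :: f₁) = vf := by
    rw [GIFS.pathDst]
    rcases Option.map_eq_some_iff.1 hlast with ⟨x, hx, hxv⟩
    rw [hx]; simpa using hxv
  rw [G.pathDst_append_cons] at h3
  exact h3

end GIFS

/-- **Lemma 4.1.** Suppose the OSC holds with open sets `(U_v)`, and let `f, g` be finite
paths starting at `u`, neither a subpath of the other. Then
(a) `S_f(U_{t(f)}) ∩ S_g(U_{t(g)}) = ∅` and (b) `S_f(F_{t(f)}) ∩ S_g(U_{t(g)}) = ∅`. -/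
theorem statement15
    {m : ℕ} (hm : 1 ≤ m) {V E : Type} [Fintype V] [Fintype E]
    (G : GIFS m V E)
    (F : V → Set (Euc m)) (hF : G.IsAttractor F)
    (U : V → Set (Euc m)) (hU : G.OSCWith U)
    (u vf vg : V) (f g : List E)
    (hf : G.IsPathFrom u vf f) (hg : G.IsPathFrom u vg g)
    (hfg : ¬ IsSubpath f g) (hgf : ¬ IsSubpath g f) :
    (G.pathMap f '' U vf) ∩ (G.pathMap g '' U vg) = ∅ ∧
    (G.pathMap f '' F vf) ∩ (G.pathMap g '' U vg) = ∅ := by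
  have hVne : Nonempty V := ⟨u⟩
  -- neither is a prefix of the other
  have hpf : ¬ f <+: g := by
    rintro ⟨t, ht⟩
    exact hfg ⟨[], t, by simpa using ht.symm⟩
  have hpg : ¬ g <+: f := by
    rintro ⟨t, ht⟩
    exact hgf ⟨[], t, by simpa using ht.symm⟩
  obtain ⟨p, e, e', f₁, g₁, hfe, hge, hee⟩ := GIFS.list_diverge f g hpf hpg
  subst hfe; subst hge
  have hsrc_e : G.src e = G.pathDst u p := G.src_of_split hf
  have hsrc_e' : G.src e' = G.pathDst u p := G.src_of_split hg
  obtain ⟨hf₁path, hf₁head, hf₁dst⟩ := G.tail_path_of_split hf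
  obtain ⟨hg₁path, hg₁head, hg₁dst⟩ := G.tail_path_of_split hg
  set A := G.map e '' U (G.dst e) with hA
  set B := G.map e' '' U (G.dst e') with hB
  have hAB : A ∩ B = ∅ := hU.2.2 (G.pathDst u p) e e' hsrc_e hsrc_e' hee
  -- decompose the path maps
  have hsplitf : G.pathMap (p ++ e :: f₁) = G.pathMap p ∘ G.map e ∘ G.pathMap f₁ := by
    rw [G.pathMap_append, G.pathMap_cons]
  have hsplitg : G.pathMap (p ++ e' :: g₁) = G.pathMap p ∘ G.map e' ∘ G.pathMap g₁ := by
    rw [G.pathMap_append, G.pathMap_cons]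
  have hUf : G.pathMap (p ++ e :: f₁) '' U vf ⊆ G.pathMap p '' A := by
    rw [hsplitf, Set.image_comp, Set.image_comp]
    refine Set.image_mono (Set.image_mono ?_)
    have := G.nestU hU f₁ (G.dst e) hf₁path hf₁head
    rwa [hf₁dst] at this
  have hUg : G.pathMap (p ++ e' :: g₁) '' U vg ⊆ G.pathMap p '' B := by
    rw [hsplitg, Set.image_comp, Set.image_comp]
    refine Set.image_mono (Set.image_mono ?_)
    have := G.nestU hU g₁ (G.dst e') hg₁path hg₁head
    rwa [hg₁dst] at this
  have hFf : G.pathMap (p ++ e :: f₁) '' F vf ⊆ G.pathMap p '' closure A := by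
    rw [hsplitf, Set.image_comp, Set.image_comp]
    refine Set.image_mono ?_
    have h1 : F vf ⊆ closure (U vf) := G.attractor_subset_closure hF hU vf
    have h2 : G.pathMap f₁ '' F vf ⊆ closure (U (G.dst e)) := by
      refine subset_trans (Set.image_mono h1) ?_
      have := G.nestCl hU f₁ (G.dst e) hf₁path hf₁head
      rwa [hf₁dst] at this
    refine subset_trans (Set.image_mono h2) ?_
    exact image_closure_subset_closure_image (G.map_continuous e)
  have hBopen : IsOpen B := G.map_isOpenMap e' _ (hU.1 (G.dst e')).2.1
  have hclAB : closure A ∩ B = ∅ := by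
    rw [Set.eq_empty_iff_forall_notMem]
    intro x hx
    have h1 : x ∈ B ∩ closure A := ⟨hx.2, hx.1⟩
    have h2 := hBopen.inter_closure h1
    rw [Set.inter_comm, hAB] at h2
    simpa using h2
  have hinj := G.pathMap_injective p
  constructor
  · rw [Set.eq_empty_iff_forall_notMem]
    intro x hx
    have h1 : x ∈ G.pathMap p '' A ∩ G.pathMap p '' B := ⟨hUf hx.1, hUg hx.2⟩
    rw [← Set.image_inter hinj, hAB] at h1
    simpa using h1
  · rw [Set.eq_empty_iff_forall_notMem]
    intro x hx
    have h1 : x ∈ G.pathMap p '' closure A ∩ G.pathMap p '' B := ⟨hFf hx.1, hUg hx.2⟩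
    rw [← Set.image_inter hinj, hclAB] at h1
    simpa using h1
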